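/- With A = Z/2[x_1,x_2,y_1,y_2], Sq the ring endomorphism sending each variable v to v + v^2, t_2 = x_1^2+x_1x_2+x_2^2, t_3 = x_1x_2(x_1+x_2), and s_1 = t_3 y_2 + t_2 y_2^2 + y_2^4: the homogeneous component of Sq(s_1) in degree 5 is 0 and the homogeneous component of Sq(s_1) in degree 6 is t_2 · s_1. -/

import Mathlib

open MvPolynomial

noncomputable section

abbrev A10 := MvPolynomial (Fin 4) (ZMod 2)

def x₁ : A10 := X 0
def x₂ : A10 := X 1
def y₂ : A10 := X 3
def t₂ : A10 := x₁ ^ 2 + x₁ * x₂ + x₂ ^ 2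
def t₃ : A10 := x₁ * x₂ * (x₁ + x₂)
def s₁ : A10 := t₃ * y₂ + t₂ * y₂ ^ 2 + y₂ ^ 4

def Sq : A10 →ₐ[ZMod 2] A10 := aeval (fun i => X i + X i ^ 2)

def P4 : A10 := y₂ ^ 4 + x₂ ^ 2 * y₂ ^ 2 + x₁ * x₂ * y₂ ^ 2 + x₁ * x₂ ^ 2 * y₂ +
    x₁ ^ 2 * y₂ ^ 2 + x₁ ^ 2 * x₂ * y₂

def P7 : A10 := x₁ * x₂ ^ 2 * y₂ ^ 4 + x₁ * x₂ ^ 4 * y₂ ^ 2 + x₁ ^ 2 * x₂ * y₂ ^ 4 +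
    x₁ ^ 2 * x₂ ^ 4 * y₂ + x₁ ^ 4 * x₂ * y₂ ^ 2 + x₁ ^ 4 * x₂ ^ 2 * y₂

def P8 : A10 := y₂ ^ 8 + x₂ ^ 4 * y₂ ^ 4 + x₁ ^ 2 * x₂ ^ 2 * y₂ ^ 4 +
    x₁ ^ 2 * x₂ ^ 4 * y₂ ^ 2 + x₁ ^ 4 * y₂ ^ 4 + x₁ ^ 4 * x₂ ^ 2 * y₂ ^ 2

lemma hx₁ : (x₁ : A10).IsHomogeneous 1 := isHomogeneous_X _ _
lemma hx₂ : (x₂ : A10).IsHomogeneous 1 := isHomogeneous_X _ _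
lemma hy₂ : (y₂ : A10).IsHomogeneous 1 := isHomogeneous_X _ _

lemma hP4 : P4.IsHomogeneous 4 := by
  refine ((((((hy₂.pow 4).add ?_).add ?_).add ?_).add ?_).add ?_)
  · exact (hx₂.pow 2).mul (hy₂.pow 2)
  · exact (hx₁.mul hx₂).mul (hy₂.pow 2)
  · exact (hx₁.mul (hx₂.pow 2)).mul hy₂
  · exact (hx₁.pow 2).mul (hy₂.pow 2)
  · exact ((hx₁.pow 2).mul hx₂).mul hy₂

lemma hP6 : (t₂ * s₁ : A10).IsHomogeneous 6 := by
  have ht₂ : (t₂ : A10).IsHomogeneous 2 :=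
    ((hx₁.pow 2).add (hx₁.mul hx₂)).add (hx₂.pow 2)
  have ht₃ : (t₃ : A10).IsHomogeneous 3 :=
    (hx₁.mul hx₂).mul (hx₁.add hx₂)
  have hs₁ : (s₁ : A10).IsHomogeneous 4 :=
    ((ht₃.mul hy₂).add (ht₂.mul (hy₂.pow 2))).add (hy₂.pow 4)
  exact ht₂.mul hs₁

lemma hP7 : P7.IsHomogeneous 7 := by
  refine ((((((hx₁.mul (hx₂.pow 2)).mul (hy₂.pow 4)).add ?_).add ?_).add ?_).add ?_).add ?_
  · exact (hx₁.mul (hx₂.pow 4)).mul (hy₂.pow 2)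
  · exact ((hx₁.pow 2).mul hx₂).mul (hy₂.pow 4)
  · exact ((hx₁.pow 2).mul (hx₂.pow 4)).mul hy₂
  · exact ((hx₁.pow 4).mul hx₂).mul (hy₂.pow 2)
  · exact ((hx₁.pow 4).mul (hx₂.pow 2)).mul hy₂

lemma hP8 : P8.IsHomogeneous 8 := by
  refine ((((((hy₂.pow 8).add ?_).add ?_).add ?_).add ?_).add ?_)
  · exact (hx₂.pow 4).mul (hy₂.pow 4)
  · exact ((hx₁.pow 2).mul (hx₂.pow 2)).mul (hy₂.pow 4)
  · exact ((hx₁.pow 2).mul (hx₂.pow 4)).mul (hy₂.pow 2)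
  · exact (hx₁.pow 4).mul (hy₂.pow 4)
  · exact ((hx₁.pow 4).mul (hx₂.pow 2)).mul (hy₂.pow 2)

set_option maxHeartbeats 2000000 in
lemma key : Sq s₁ = P4 + t₂ * s₁ + P7 + P8 := by
  have h2 : (2 : A10) = 0 := by
    rw [show (2 : A10) = C 1 + C 1 by rw [C_1]; ring, ← C_add,
      show (1 : ZMod 2) + 1 = 0 from rfl, map_zero]
  simp only [Sq, s₁, t₂, t₃, x₁, x₂, y₂, P4, P7, P8, map_add, map_mul, map_pow, aeval_X]
  ring_nf
  linear_combination (((X 0 * X 1 * X 3 ^ 3) * 1 + (X 0 * X 1 ^ 2 * X 3 ^ 2) * 1 + (X 0 * X 1 ^ 2 * X 3 ^ 3) * 1 + (X 0 * X 1 ^ 3 * X 3) * 1 + (X 0 ^ 2 * X 1 * X 3 ^ 2) * 1 + (X 0 ^ 2 * X 1 * X 3 ^ 3) * 1 + (X 0 ^ 2 * X 1 ^ 2 * X 3) * 1 + (X 0 ^ 2 * X 1 ^ 2 * X 3 ^ 3) * 1 + (X 0 ^ 2 * X 1 ^ 3 * X 3 ^ 2) * 1 + (X 0 ^ 2 * X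 3 ^ 3) * 1 + (X 0 ^ 3 * X 1 * X 3) * 1 + (X 0 ^ 3 * X 1 ^ 2 * X 3 ^ 2) * 1 + (X 0 ^ 3 * X 3 ^ 2) * 1 + (X 0 ^ 3 * X 3 ^ 3) * 2 + (X 0 ^ 3 * X 3 ^ 4) * 1 + (X 0 ^ 4 * X 3 ^ 3) * 1 + (X 1 ^ 2 * X 3 ^ 3) * 1 + (X 1 ^ 3 * X 3 ^ 2) * 1 + (X 1 ^ 3 * X 3 ^ 3) * 2 + (X 1 ^ 3 * X 3 ^ 4) * 1 + (X 1 ^ 4 * X 3 ^ 3) * 1 + (X 3 ^ 5) * 2 + (X 3 ^ 6) * 3 + (X 3 ^ 7) * 2) : A10) * h2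

/-- `Sq¹ s₁ = 0` and `Sq² s₁ = t₂ s₁`: the degree-5 homogeneous component of `Sq s₁` is `0`
and the degree-6 homogeneous component of `Sq s₁` is `t₂ · s₁`. -/
theorem stmt_10 :
    homogeneousComponent 5 (Sq s₁) = 0 ∧ homogeneousComponent 6 (Sq s₁) = t₂ * s₁ := by
  rw [key]
  simp only [map_add, homogeneousComponent_of_mem ((mem_homogeneousSubmodule _ _).2 hP4),
    homogeneousComponent_of_mem ((mem_homogeneousSubmodule _ _).2 hP6),
    homogeneousComponent_of_mem ((mem_homogeneousSubmodule _ _).2 hP7),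
    homogeneousComponent_of_mem ((mem_homogeneousSubmodule _ _).2 hP8)]
  norm_num

end
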